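/- Let K be a number field, 𝔭 a nonzero prime ideal of its ring of integers, and ν the normalized discrete valuation on K associated to 𝔭. Let E be an elliptic curve over K and let P, Q ∈ E(K) be points such that a·P + b·Q ≠ O for every (a, b) ∈ ℤ² with (a, b) ≠ (0, 0); write v·𝐏 = v₁·P + v₂·Q for v = (v₁, v₂) ∈ ℤ², and write x(R) for the x-coordinate of a point R ≠ O. Let λ : E(K) \ {O} → ℝ be a function satisfying the quasi-parallelogram law: for all R, S ∈ E(K) with R, S, R+S, R−S all different from O, λ(R+S) + λ(R−S) = 2·λ(R) + 2·λ(S) + ν(x(R) − x(S)). Let W : ℤ² → K be an elliptic net such that W(1,0) = W(0,1) = W(1,1) = 1, W(v) ≠ 0 for every v ≠ (0,0), and such that for all u, v ∈ ℤ² with u, v, u+v, u−v all different from (0,0), W(v)²·W(u)²·(x(v·𝐏) − x(u·𝐏)) = −W(v+u)·W(v−u). Then for every (a, b) ∈ ℤ² with (a, b) ≠ (0, 0): λ(a·P + b·Q) = a²·λ(P) + b²·λ(Q) + a·b·(λ(P+Q) − λ(P) − λ(Q)) + ν(W(a, b)). -/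

import Mathlib

/-- An *elliptic net* is a map `W : A → K` from an abelian group `A` to a field `K`
such that `W 0 = 0` and, for all `p q r s : A`,
`W (p+q+s) * W (p-q) * W (r+s) * W r + W (q+r+s) * W (q-r) * W (p+s) * W p
  + W (r+p+s) * W (r-p) * W (q+s) * W q = 0`. -/
def IsEllipticNet' {A K : Type*} [AddCommGroup A] [CommRing K] (W : A → K) : Prop :=
  W 0 = 0 ∧ ∀ p q r s : A,
    W (p + q + s) * W (p - q) * W (r + s) * W r +
      W (q + r + s) * W (q - r) * W (p + s) * W p +
      W (r + p + s) * W (r - p) * W (q + s) * W q = 0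

/-- The `x`-coordinate of a rational point on a Weierstrass curve in affine coordinates,
with the junk value `0` at the point at infinity. -/
noncomputable def WeierstrassCurve.Affine.Point.xCoord {K : Type*} [Field K]
    {E : WeierstrassCurve.Affine K} : E.Point → K
  | .zero => 0
  | .some (x := x) _ _ => x

private lemma NLH.lin_rec_zero (f : ℤ → ℝ) (hf : ∀ a : ℤ, f (a + 1) + f (a - 1) = 2 * f a)
    (h0 : f 0 = 0) (h1 : f 1 = 0) : ∀ a : ℤ, f a = 0 := by
  have pos : ∀ n : ℕ, f (n : ℤ) = 0 ∧ f ((n : ℤ) + 1) = 0 := by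
    intro n
    induction n with
    | zero => exact ⟨by simpa using h0, by simpa using h1⟩
    | succ n ih =>
      have h := hf ((n : ℤ) + 1)
      have e : ((n : ℤ) + 1) - 1 = (n : ℤ) := by ring
      rw [e] at h
      refine ⟨by push_cast; exact ih.2, ?_⟩
      have e2 : ((n + 1 : ℕ) : ℤ) + 1 = ((n : ℤ) + 1) + 1 := by push_cast; ring
      rw [e2]
      linarith [ih.1, ih.2]
  have neg : ∀ n : ℕ, f (-(n : ℤ)) = 0 ∧ f (-(n : ℤ) + 1) = 0 := by
    intro n
    induction n with
    | zero => exact ⟨by simpa using h0, by simpa using h1⟩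
    | succ n ih =>
      have h := hf (-(n : ℤ))
      refine ⟨?_, ?_⟩
      · have e : (-((n + 1 : ℕ) : ℤ)) = -(n : ℤ) - 1 := by push_cast; ring
        rw [e]
        linarith [ih.1, ih.2]
      · have e : (-((n + 1 : ℕ) : ℤ) + 1) = -(n : ℤ) := by push_cast; ring
        rw [e]
        exact ih.1
  intro a
  obtain ⟨n, rfl | rfl⟩ := a.eq_nat_or_neg
  · exact (pos n).1
  · exact (neg n).1

private lemma NLH.lin_rec_zero' (f : ℤ → ℝ) (hf : ∀ a : ℤ, 2 ≤ a → f (a + 1) + f (a - 1) = 2 * f a)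
    (h1 : f 1 = 0) (h2 : f 2 = 0) : ∀ a : ℤ, 1 ≤ a → f a = 0 := by
  have pos : ∀ n : ℕ, f ((n : ℤ) + 1) = 0 ∧ f ((n : ℤ) + 2) = 0 := by
    intro n
    induction n with
    | zero => exact ⟨by simpa using h1, by simpa using h2⟩
    | succ n ih =>
      have h := hf ((n : ℤ) + 2) (by omega)
      have e : ((n : ℤ) + 2) - 1 = (n : ℤ) + 1 := by ring
      rw [e] at h
      refine ⟨?_, ?_⟩
      · have e2 : ((n + 1 : ℕ) : ℤ) + 1 = (n : ℤ) + 2 := by push_cast; ring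
        rw [e2]; exact ih.2
      · have e2 : ((n + 1 : ℕ) : ℤ) + 2 = ((n : ℤ) + 2) + 1 := by push_cast; ring
        rw [e2]
        linarith [ih.1, ih.2]
  intro a ha
  obtain ⟨n, hn⟩ := Int.le.dest ha
  have e : a = (n : ℤ) + 1 := by omega
  rw [e]
  exact (pos n).1

private lemma NLH.quad_zero (h : ℤ × ℤ → ℝ)
    (pl : ∀ a b c d : ℤ, ¬(a = 0 ∧ b = 0) → ¬(c = 0 ∧ d = 0) →
      ¬(a + c = 0 ∧ b + d = 0) → ¬(a - c = 0 ∧ b - d = 0) →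
      h (a + c, b + d) + h (a - c, b - d) = 2 * h (a, b) + 2 * h (c, d))
    (h10 : h (1, 0) = 0) (h01 : h (0, 1) = 0) (h11 : h (1, 1) = 0) :
    ∀ a b : ℤ, ¬(a = 0 ∧ b = 0) → h (a, b) = 0 := by
  have even : ∀ a b : ℤ, ¬(a = 0 ∧ b = 0) → h (-a, -b) = h (a, b) := by
    intro a b hab
    have e1 := pl (2 * a) (2 * b) a b (by omega) (by omega) (by omega) (by omega)
    have e2 := pl a b (2 * a) (2 * b) (by omega) (by omega) (by omega) (by omega)
    rw [show (2 * a + a : ℤ) = a + 2 * a from by ring, show (2 * b + b : ℤ) = b + 2 * b from by ring,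
      show (2 * a - a : ℤ) = a from by ring, show (2 * b - b : ℤ) = b from by ring] at e1
    rw [show (a - 2 * a : ℤ) = -a from by ring, show (b - 2 * b : ℤ) = -b from by ring] at e2
    linarith
  have col1 : ∀ b : ℤ, h (1, b) = 0 := by
    refine NLH.lin_rec_zero (fun b => h (1, b)) ?_ h10 h11
    intro x
    have := pl 1 x 0 1 (by omega) (by omega) (by omega) (by omega)
    norm_num [h01] at this ⊢
    linarith
  have row1 : ∀ a : ℤ, h (a, 1) = 0 := by
    refine NLH.lin_rec_zero (fun a => h (a, 1)) ?_ h01 h11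
    intro x
    have := pl x 1 1 0 (by omega) (by omega) (by omega) (by omega)
    norm_num [h10] at this ⊢
    linarith
  have h1m1 : h (1, -1) = 0 := col1 (-1)
  have r1 := pl 1 1 1 (-1) (by omega) (by omega) (by omega) (by omega)
  have r2 := pl 2 1 0 1 (by omega) (by omega) (by omega) (by omega)
  have r3 := pl 1 2 1 0 (by omega) (by omega) (by omega) (by omega)
  rw [show (1 + 1 : ℤ) = 2 from by norm_num, show (1 + -1 : ℤ) = 0 from by norm_num,
    show (1 - 1 : ℤ) = 0 from by norm_num, show (1 - -1 : ℤ) = 2 from by norm_num,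
    h11, h1m1] at r1
  rw [show (2 + 0 : ℤ) = 2 from by norm_num, show (1 + 1 : ℤ) = 2 from by norm_num,
    show (2 - 0 : ℤ) = 2 from by norm_num, show (1 - 1 : ℤ) = 0 from by norm_num,
    row1 2, h01] at r2
  rw [show (1 + 1 : ℤ) = 2 from by norm_num, show (2 + 0 : ℤ) = 2 from by norm_num,
    show (1 - 1 : ℤ) = 0 from by norm_num, show (2 - 0 : ℤ) = 2 from by norm_num,
    col1 2, h10] at r3
  have h02 : h (0, 2) = 0 := by linarith
  have h20 : h (2, 0) = 0 := by linarith
  have col0 : ∀ b : ℤ, 1 ≤ b → h (0, b) = 0 := by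
    refine NLH.lin_rec_zero' (fun b => h (0, b)) ?_ h01 h02
    intro x hx
    have := pl 0 x 0 1 (by omega) (by omega) (by omega) (by omega)
    norm_num [h01] at this ⊢
    linarith
  have row0 : ∀ a : ℤ, 1 ≤ a → h (a, 0) = 0 := by
    refine NLH.lin_rec_zero' (fun a => h (a, 0)) ?_ h10 h20
    intro x hx
    have := pl x 0 1 0 (by omega) (by omega) (by omega) (by omega)
    norm_num [h10] at this ⊢
    linarith
  intro a b hab
  by_cases hb : b = 0
  · subst hb
    rcases le_or_gt 1 a with h' | h'
    · exact row0 a h'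
    · have e := even a 0 hab
      rw [neg_zero] at e
      rw [← e]
      exact row0 (-a) (by omega)
  · have f0 : h (0, b) = 0 := by
      rcases le_or_gt 1 b with h' | h'
      · exact col0 b h'
      · have e := even 0 b (by omega)
        rw [neg_zero] at e
        rw [← e]
        exact col0 (-b) (by omega)
    refine NLH.lin_rec_zero (fun x => h (x, b)) ?_ f0 (col1 b) a
    intro x
    have := pl x b 1 0 (by omega) (by omega) (by omega) (by omega)
    norm_num [h10] at this ⊢
    linarith

open Classical UniqueFactorizationMonoid WeierstrassCurve.Affine.Point in
/-- The Néron local height formula for the `ℤ`-linear combination `a • P + b • Q`: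
if `λ` satisfies the quasi-parallelogram law with respect to the normalized discrete
valuation `ν` associated to a nonzero prime `𝔭`, and `W : ℤ² → K` is an elliptic net
normalized by `W (1,0) = W (0,1) = W (1,1) = 1`, nonvanishing away from `(0,0)`, and
compatible with differences of `x`-coordinates of linear combinations of `P` and `Q`,
then `λ (a•P + b•Q) = a²·λ P + b²·λ Q + a·b·(λ (P+Q) - λ P - λ Q) + ν (W (a, b))`. -/
theorem neron_local_height_linear_combination
    (K : Type*) [Field K] [NumberField K]
    [DecidableEq (Ideal (NumberField.RingOfIntegers K))]
    (𝔭 : Ideal (NumberField.RingOfIntegers K)) (hp : 𝔭.IsPrime) (hp0 : 𝔭 ≠ ⊥)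
    (ν : K → ℤ)
    (hν : ∀ a b : NumberField.RingOfIntegers K, a ≠ 0 → b ≠ 0 →
      ν (algebraMap (NumberField.RingOfIntegers K) K a /
          algebraMap (NumberField.RingOfIntegers K) K b) =
        (Multiset.count 𝔭 (normalizedFactors (Ideal.span {a})) : ℤ) -
          (Multiset.count 𝔭 (normalizedFactors (Ideal.span {b})) : ℤ))
    (E : WeierstrassCurve.Affine K) [E.IsElliptic]
    (P Q : E.Point)
    (hindep : ∀ a b : ℤ, (a, b) ≠ (0, 0) → a • P + b • Q ≠ 0)
    (lam : E.Point → ℝ)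
    (hlam : ∀ R S : E.Point, R ≠ 0 → S ≠ 0 → R + S ≠ 0 → R - S ≠ 0 →
      lam (R + S) + lam (R - S) =
        2 * lam R + 2 * lam S + (ν (xCoord R - xCoord S) : ℝ))
    (W : ℤ × ℤ → K) (hW : IsEllipticNet' W)
    (hW10 : W (1, 0) = 1) (hW01 : W (0, 1) = 1) (hW11 : W (1, 1) = 1)
    (hWne : ∀ v : ℤ × ℤ, v ≠ 0 → W v ≠ 0)
    (hcompat : ∀ u v : ℤ × ℤ, u ≠ 0 → v ≠ 0 → u + v ≠ 0 → u - v ≠ 0 →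
      W v ^ 2 * W u ^ 2 *
          (xCoord (v.1 • P + v.2 • Q) - xCoord (u.1 • P + u.2 • Q)) =
        -(W (v + u) * W (v - u))) :
    ∀ a b : ℤ, (a, b) ≠ (0, 0) →
      lam (a • P + b • Q) =
        (a : ℝ) ^ 2 * lam P + (b : ℝ) ^ 2 * lam Q +
          (a : ℝ) * (b : ℝ) * (lam (P + Q) - lam P - lam Q) +
          (ν (W (a, b)) : ℝ) := by
  classical
  -- basic facts about the valuation ν
  have hinj : Function.Injective (algebraMap (NumberField.RingOfIntegers K) K) :=
    IsFractionRing.injective _ _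
  have hmap0 : ∀ r : NumberField.RingOfIntegers K, algebraMap _ K r = 0 ↔ r = 0 := fun r =>
    map_eq_zero_iff _ hinj
  have cmul : ∀ x y : NumberField.RingOfIntegers K, x ≠ 0 → y ≠ 0 →
      Multiset.count 𝔭 (normalizedFactors (Ideal.span {x * y})) =
        Multiset.count 𝔭 (normalizedFactors (Ideal.span {x})) +
          Multiset.count 𝔭 (normalizedFactors (Ideal.span {y})) := by
    intro x y hx hy
    have hx' : (Ideal.span {x} : Ideal (NumberField.RingOfIntegers K)) ≠ 0 := by
      simpa [Ideal.zero_eq_bot, Ideal.span_singleton_eq_bot] using hx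
    have hy' : (Ideal.span {y} : Ideal (NumberField.RingOfIntegers K)) ≠ 0 := by
      simpa [Ideal.zero_eq_bot, Ideal.span_singleton_eq_bot] using hy
    rw [← Ideal.span_singleton_mul_span_singleton, normalizedFactors_mul hx' hy',
      Multiset.count_add]
  have hν1 : ν 1 = 0 := by
    have := hν 1 1 one_ne_zero one_ne_zero
    simpa using this
  have hνmul : ∀ x y : K, x ≠ 0 → y ≠ 0 → ν (x * y) = ν x + ν y := by
    intro x y hx hy
    obtain ⟨x1, x2, hx2, hxe⟩ :=
      IsFractionRing.div_surjective (A := NumberField.RingOfIntegers K) x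
    obtain ⟨y1, y2, hy2, hye⟩ :=
      IsFractionRing.div_surjective (A := NumberField.RingOfIntegers K) y
    have hx2' : x2 ≠ 0 := nonZeroDivisors.ne_zero hx2
    have hy2' : y2 ≠ 0 := nonZeroDivisors.ne_zero hy2
    have hx1' : x1 ≠ 0 := by
      rintro rfl; apply hx; rw [← hxe]; simp
    have hy1' : y1 ≠ 0 := by
      rintro rfl; apply hy; rw [← hye]; simp
    have hxy : x * y = algebraMap (NumberField.RingOfIntegers K) K (x1 * y1) /
        algebraMap (NumberField.RingOfIntegers K) K (x2 * y2) := by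
      rw [← hxe, ← hye, div_mul_div_comm, ← map_mul, ← map_mul]
    have e1 := hν (x1 * y1) (x2 * y2) (mul_ne_zero hx1' hy1') (mul_ne_zero hx2' hy2')
    rw [← hxy] at e1
    have e2 := hν x1 x2 hx1' hx2'
    rw [hxe] at e2
    have e3 := hν y1 y2 hy1' hy2'
    rw [hye] at e3
    rw [e1, e2, e3, cmul _ _ hx1' hy1', cmul _ _ hx2' hy2']
    push_cast
    ring
  have hνdiv : ∀ x y : K, x ≠ 0 → y ≠ 0 → ν (x / y) = ν x - ν y := by
    intro x y hx hy
    have h1 := hνmul (x / y) y (div_ne_zero hx hy) hy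
    rw [div_mul_cancel₀ _ hy] at h1
    omega
  have hνneg : ∀ x : K, x ≠ 0 → ν (-x) = ν x := by
    intro x hx
    have hm1 : ν (-1 : K) = 0 := by
      have := hν (-1) 1 (by norm_num) one_ne_zero
      simpa [Ideal.span_singleton_neg] using this
    have h2 := hνmul (-1) x (by norm_num) hx
    rw [hm1, neg_one_mul] at h2
    omega
  have hνsq : ∀ x : K, x ≠ 0 → ν (x ^ 2) = 2 * ν x := by
    intro x hx
    rw [sq, hνmul x x hx hx]
    ring
  -- helper for nonvanishing
  have nzv : ∀ x y : ℤ, ¬(x = 0 ∧ y = 0) → ((x, y) : ℤ × ℤ) ≠ 0 := by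
    intro x y hxy e
    rw [Prod.ext_iff] at e
    exact hxy ⟨e.1, e.2⟩
  -- the key quasi-parallelogram identity for lam in terms of W
  have key : ∀ p q r s : ℤ, ¬(p = 0 ∧ q = 0) → ¬(r = 0 ∧ s = 0) →
      ¬(p + r = 0 ∧ q + s = 0) → ¬(p - r = 0 ∧ q - s = 0) →
      lam ((p + r) • P + (q + s) • Q) + lam ((p - r) • P + (q - s) • Q)
        = 2 * lam (p • P + q • Q) + 2 * lam (r • P + s • Q)
          + ((ν (W (p + r, q + s)) + ν (W (p - r, q - s))
              - 2 * ν (W (p, q)) - 2 * ν (W (r, s)) : ℤ) : ℝ) := by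
    intro p q r s h1 h2 h3 h4
    have hR : p • P + q • Q ≠ 0 := hindep p q (nzv _ _ h1)
    have hS : r • P + s • Q ≠ 0 := hindep r s (nzv _ _ h2)
    have hRS : (p + r) • P + (q + s) • Q ≠ 0 := hindep _ _ (nzv _ _ h3)
    have hRS' : (p - r) • P + (q - s) • Q ≠ 0 := hindep _ _ (nzv _ _ h4)
    have eadd : (p + r) • P + (q + s) • Q = (p • P + q • Q) + (r • P + s • Q) := by
      rw [add_zsmul, add_zsmul]; abel
    have esub : (p - r) • P + (q - s) • Q = (p • P + q • Q) - (r • P + s • Q) := by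
      rw [sub_zsmul, sub_zsmul]; abel
    have hl := hlam (p • P + q • Q) (r • P + s • Q) hR hS
      (by rw [← eadd]; exact hRS) (by rw [← esub]; exact hRS')
    have hcp := hcompat (r, s) (p, q) (nzv _ _ h2) (nzv _ _ h1)
      (by rw [Prod.mk_add_mk]; exact nzv _ _ (by omega))
      (by rw [Prod.mk_sub_mk]; exact nzv _ _ (by omega))
    rw [Prod.mk_add_mk, Prod.mk_sub_mk] at hcp
    dsimp only at hcp
    have hWpq := hWne (p, q) (nzv _ _ h1)
    have hWrs := hWne (r, s) (nzv _ _ h2)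
    have hWadd := hWne (p + r, q + s) (nzv _ _ h3)
    have hWsub := hWne (p - r, q - s) (nzv _ _ h4)
    have hxe : xCoord (p • P + q • Q) - xCoord (r • P + s • Q)
        = -(W (p + r, q + s) * W (p - r, q - s)) / (W (p, q) ^ 2 * W (r, s) ^ 2) := by
      rw [eq_div_iff (mul_ne_zero (pow_ne_zero _ hWpq) (pow_ne_zero _ hWrs))]
      linear_combination hcp
    have hνx : ν (xCoord (p • P + q • Q) - xCoord (r • P + s • Q))
        = ν (W (p + r, q + s)) + ν (W (p - r, q - s)) - 2 * ν (W (p, q)) - 2 * ν (W (r, s)) := by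
      rw [hxe, hνdiv _ _ (by simpa using mul_ne_zero hWadd hWsub)
          (mul_ne_zero (pow_ne_zero _ hWpq) (pow_ne_zero _ hWrs)),
        hνneg _ (mul_ne_zero hWadd hWsub), hνmul _ _ hWadd hWsub,
        hνmul _ _ (pow_ne_zero 2 hWpq) (pow_ne_zero 2 hWrs), hνsq _ hWpq, hνsq _ hWrs]
      ring
    rw [eadd, esub, hl, hνx]
  -- apply the abstract quadraticity lemma to the defect function
  have main := NLH.quad_zero (fun v : ℤ × ℤ =>
      lam (v.1 • P + v.2 • Q) -
        ((v.1 : ℝ) ^ 2 * lam P + (v.2 : ℝ) ^ 2 * lam Q +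
          (v.1 : ℝ) * (v.2 : ℝ) * (lam (P + Q) - lam P - lam Q)) - (ν (W v) : ℝ))
    ?_ ?_ ?_ ?_
  · intro a b hab
    have h := main a b (fun h' => hab (by rw [h'.1, h'.2]))
    dsimp only at h
    linarith
  · intro p q r s h1 h2 h3 h4
    dsimp only
    have k := key p q r s h1 h2 h3 h4
    push_cast at k ⊢
    linear_combination k
  · dsimp only
    rw [hW10, hν1, one_zsmul, zero_zsmul, add_zero]
    push_cast
    ring
  · dsimp only
    rw [hW01, hν1, one_zsmul, zero_zsmul, zero_add]
    push_cast
    ring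
  · dsimp only
    rw [hW11, hν1, one_zsmul, one_zsmul]
    push_cast
    ring
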